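/- The image of a geodesic γ : [0, L] → X in a metric space X contains at most two points that are degree-1 points of X, namely γ(0) and γ(L). -/

import Mathlib

open Set

/-- A geodesic parameterized on `[0, L]`: an isometric embedding of an interval. -/
def IsGeodesic {X : Type*} [MetricSpace X] (γ : ℝ → X) (L : ℝ) : Prop :=
  0 ≤ L ∧ ∀ s ∈ Icc (0 : ℝ) L, ∀ t ∈ Icc (0 : ℝ) L, dist (γ s) (γ t) = |s - t|

/-- `x` is a degree-1 point: it has an open neighborhood homeomorphic to `[0,1)`
with `x` corresponding to `0`. -/
def IsDegreeOnePoint {X : Type*} [TopologicalSpace X] (x : X) : Prop :=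
  ∃ U : Set X, IsOpen U ∧ ∃ hx : x ∈ U, ∃ e : U ≃ₜ Ico (0 : ℝ) 1,
    e ⟨x, hx⟩ = ⟨0, Set.left_mem_Ico.mpr one_pos⟩

/-- The image of a geodesic contains at most two degree-1 points of `X`,
namely `γ 0` and `γ L`. -/
theorem geodesic_degree_one_points_are_endpoints
    {X : Type*} [MetricSpace X] (γ : ℝ → X) (L : ℝ)
    (hγ : IsGeodesic γ L) :
    ∀ x ∈ γ '' Icc 0 L, IsDegreeOnePoint x → x = γ 0 ∨ x = γ L := by
  classical
  rintro x ⟨t, ht, rfl⟩ hdeg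
  by_contra hcon
  push_neg at hcon
  obtain ⟨h0, hL⟩ := hcon
  obtain ⟨hL0, hdist⟩ := hγ
  have hinj : ∀ a ∈ Icc (0:ℝ) L, ∀ b ∈ Icc (0:ℝ) L, γ a = γ b → a = b := by
    intro a ha b hb hab
    have h1 := hdist a ha b hb
    rw [hab, dist_self] at h1
    have h2 := abs_eq_zero.mp h1.symm
    linarith [abs_eq_zero.mp h1.symm, sub_eq_zero.mp h2]
  have ht0 : 0 < t := ht.1.lt_of_ne (fun h => h0 (by rw [← h]))
  have htL : t < L := ht.2.lt_of_ne (fun h => hL (by rw [h]))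
  obtain ⟨U, hUopen, hxU, e, he⟩ := hdeg
  obtain ⟨δ, hδ, hball⟩ := Metric.isOpen_iff.mp hUopen _ hxU
  set ε := min (δ/2) (min t (L - t)) with hεdef
  have hε : 0 < ε := lt_min (by linarith) (lt_min ht0 (by linarith))
  have hεt : ε ≤ t := (min_le_right _ _).trans (min_le_left _ _)
  have hεL : ε ≤ L - t := (min_le_right _ _).trans (min_le_right _ _)
  have hεδ : ε < δ := (min_le_left _ _).trans_lt (by linarith)
  have hsub : Icc (t-ε) (t+ε) ⊆ Icc 0 L := by
    intro s hs
    constructor <;> [linarith [hs.1]; linarith [hs.2]]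
  have hmem : ∀ s ∈ Icc (t-ε) (t+ε), γ s ∈ U := by
    intro s hs
    apply hball
    rw [Metric.mem_ball, hdist s (hsub hs) t ht]
    rw [abs_sub_lt_iff]
    constructor <;> [linarith [hs.2]; linarith [hs.1]]
  set g : X → ℝ := fun y => if h : y ∈ U then ((e ⟨y, h⟩ : Ico (0:ℝ) 1) : ℝ) else 0 with hgdef
  set f : ℝ → ℝ := fun s => g (γ s) with hfdef
  have hgval : ∀ y (h : y ∈ U), g y = ((e ⟨y, h⟩ : Ico (0:ℝ) 1) : ℝ) := by
    intro y h; simp [hgdef, dif_pos h]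
  have hgU : ContinuousOn g U := by
    rw [continuousOn_iff_continuous_restrict]
    have : U.domRestrict g = fun u => ((e u : Ico (0:ℝ) 1) : ℝ) := by
      funext u
      simp only [Set.domRestrict_apply, hgdef, dif_pos u.2]
    rw [this]
    exact continuous_subtype_val.comp e.continuous
  have hγc : ContinuousOn γ (Icc 0 L) := by
    apply LipschitzOnWith.continuousOn (K := 1)
    apply LipschitzOnWith.of_dist_le_mul
    intro a ha b hb
    rw [hdist a ha b hb, Real.dist_eq]
    simp
  have hfc : ContinuousOn f (Icc (t-ε) (t+ε)) :=
    hgU.comp (hγc.mono hsub) hmem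
  have hf0 : f t = 0 := by
    rw [hfdef]
    simp only [hgval _ hxU, he]
  have finj : ∀ a ∈ Icc (t-ε) (t+ε), ∀ b ∈ Icc (t-ε) (t+ε), f a = f b → a = b := by
    intro a ha b hb hab
    rw [hfdef] at hab
    simp only [hgval _ (hmem a ha), hgval _ (hmem b hb)] at hab
    have : γ a = γ b := by
      have h1 : e ⟨γ a, hmem a ha⟩ = e ⟨γ b, hmem b hb⟩ := Subtype.ext hab
      have h2 := e.injective h1
      exact congrArg Subtype.val h2
    exact hinj a (hsub ha) b (hsub hb) this
  have htmem : t ∈ Icc (t-ε) (t+ε) := ⟨by linarith, by linarith⟩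
  have hpos : ∀ s ∈ Icc (t-ε) (t+ε), s ≠ t → 0 < f s := by
    intro s hs hst
    have hge : (0:ℝ) ≤ f s := by
      rw [hfdef]; simp only [hgval _ (hmem s hs)]
      exact (e ⟨γ s, hmem s hs⟩).2.1
    rcases lt_or_eq_of_le hge with h | h
    · exact h
    · exact absurd (finj s hs t htmem (by rw [← h, hf0])) hst
  set c := min (f (t-ε)) (f (t+ε)) with hcdef
  have hc : 0 < c := lt_min
    (hpos (t-ε) ⟨le_refl _, by linarith⟩ (by linarith))
    (hpos (t+ε) ⟨by linarith, le_refl _⟩ (by linarith))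
  have h1 : c ∈ f '' Icc (t-ε) t := by
    apply intermediate_value_Icc' (by linarith)
      (hfc.mono (Icc_subset_Icc le_rfl (by linarith)))
    exact ⟨hf0 ▸ hc.le, min_le_left _ _⟩
  have h2 : c ∈ f '' Icc t (t+ε) := by
    apply intermediate_value_Icc (by linarith)
      (hfc.mono (Icc_subset_Icc (by linarith) le_rfl))
    exact ⟨hf0 ▸ hc.le, min_le_right _ _⟩
  obtain ⟨a, ha, hfa⟩ := h1
  obtain ⟨b, hb, hfb⟩ := h2
  have hab : a = b := finj a ⟨ha.1, by linarith [ha.2]⟩ b ⟨by linarith [hb.1], hb.2⟩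
    (hfa.trans hfb.symm)
  have hat : a = t := le_antisymm ha.2 (hab ▸ hb.1)
  rw [hat, hf0] at hfa
  exact absurd hfa.symm hc.ne'
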